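/- If there exist n-by-n real symmetric positive definite matrices giving a word W an eigenvalue that is not a positive real number, then for every positive integer k there exist real symmetric positive definite matrices A', B' (of the same size) such that W(A',B')^k has an eigenvalue that is not a positive real number. -/

import Mathlib

open Matrix

/-- Evaluate a word over `{A,B}` (`false ↦ A`, `true ↦ B`) at two matrices. -/
def wordEval {n : Type*} [Fintype n] [DecidableEq n]
    (w : List Bool) (A B : Matrix n n ℝ) : Matrix n n ℝ :=
  (w.map (fun c => if c then B else A)).prod

namespace WordPowAux

open Polynomial Filter Topology

section Norms

attribute [local instance] Matrix.linftyOpNormedRing Matrix.linftyOpNormedAlgebra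

variable {n : Type*} [Fintype n] [DecidableEq n]

theorem bridge (M : Matrix n n ℂ) (μ : ℂ) : μ ∈ spectrum ℂ M ↔ M.charpoly.IsRoot μ := by
  rw [spectrum.mem_iff, IsRoot, Matrix.charpoly, eval_det, matPolyEquiv_charmatrix]
  simp only [eval_sub, eval_X, eval_C]
  rw [show (algebraMap ℂ (Matrix n n ℂ)) μ = Matrix.scalar n μ from rfl,
    Matrix.isUnit_iff_isUnit_det]
  simp [isUnit_iff_ne_zero]

theorem rootBound [Nonempty n] (M : Matrix n n ℂ) (z : ℂ) (hz : M.charpoly.IsRoot z) :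
    ‖z‖ ≤ ∑ i, ∑ j, ‖M i j‖ := by
  have h2 : ‖z‖ ≤ ‖M‖ := spectrum.norm_le_norm_of_mem ((bridge M z).mpr hz)
  refine h2.trans ?_
  rw [Matrix.linfty_opNorm_def]
  obtain ⟨i, -, hi⟩ := Finset.exists_mem_eq_sup Finset.univ Finset.univ_nonempty
    (fun i => ∑ j, ‖M i j‖₊)
  rw [hi]
  push_cast
  refine Finset.single_le_sum (f := fun i => ∑ j, ‖M i j‖) (fun i _ => ?_) (Finset.mem_univ i)
  positivity

end Norms

theorem roots_tendsto {N : ℕ} (q : ℕ → Polynomial ℂ) (q' : Polynomial ℂ)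
    (hmon : ∀ m, (q m).Monic) (hdeg : ∀ m, (q m).natDegree = N)
    (hev : ∀ z : ℂ, Tendsto (fun m => (q m).eval z) atTop (nhds (q'.eval z)))
    (R : ℝ) (hR : ∀ m, ∀ z ∈ (q m).roots, ‖z‖ ≤ R) :
    ∃ (φ : ℕ → ℕ) (r : ℕ → Fin N → ℂ) (ρ : Fin N → ℂ), StrictMono φ ∧
      (∀ m, (q (φ m)).roots = ↑(List.ofFn (r m))) ∧
      (∀ i, Tendsto (fun m => r m i) atTop (nhds (ρ i))) ∧
      q'.roots = ↑(List.ofFn ρ) := by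
  have hcard : ∀ m, Multiset.card (q m).roots = N := fun m => by
    rw [splits_iff_card_roots.mp (IsAlgClosed.splits (q m)), hdeg]
  have hlen : ∀ m, ((q m).roots.toList.length) = N := fun m => by
    rw [Multiset.length_toList, hcard]
  set v : ℕ → Fin N → ℂ := fun m i => (q m).roots.toList.get (Fin.cast (hlen m).symm i) with hv
  have hofn : ∀ m, (q m).roots = ↑(List.ofFn (v m)) := by
    intro m
    have : List.ofFn (v m) = (q m).roots.toList := by
      apply List.ext_getElem
      · simp [hlen m]
      · intro i h1 h2
        simp [hv]
    rw [this, Multiset.coe_toList]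
  have hvball : ∀ m, v m ∈ Metric.closedBall (0 : Fin N → ℂ) (max R 0) := by
    intro m
    rw [Metric.mem_closedBall, dist_zero_right]
    refine (pi_norm_le_iff_of_nonneg (le_max_right _ _)).mpr fun i => ?_
    have hmem : v m i ∈ (q m).roots := by
      rw [hofn m]
      exact List.mem_ofFn.mpr ⟨i, rfl⟩
    exact le_max_of_le_left (hR m _ hmem)
  obtain ⟨ρ, -, φ, hφ, hconv⟩ := tendsto_subseq_of_bounded Metric.isBounded_closedBall hvball
  refine ⟨φ, fun m => v (φ m), ρ, hφ, fun m => hofn (φ m), ?_, ?_⟩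
  · intro i
    exact ((continuous_apply i).continuousAt.tendsto.comp hconv :)
  · have hqeq : q' = ∏ i : Fin N, (X - C (ρ i)) := by
      apply Polynomial.funext
      intro z
      have h1 : Tendsto (fun m => (q (φ m)).eval z) atTop (nhds (q'.eval z)) :=
        (hev z).comp (hφ.tendsto_atTop)
      have h2 : ∀ m, (q (φ m)).eval z = ∏ i : Fin N, (z - v (φ m) i) := by
        intro m
        conv_lhs => rw [(IsAlgClosed.splits (q (φ m))).eq_prod_roots_of_monic (hmon _)
          , hofn (φ m)]
        rw [Multiset.map_coe, Multiset.prod_coe, List.map_ofFn, List.prod_ofFn]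
        simp [eval_prod]
      have h3 : Tendsto (fun m => ∏ i : Fin N, (z - v (φ m) i)) atTop
          (nhds (∏ i : Fin N, (z - ρ i))) := by
        apply tendsto_finset_prod
        intro i _
        exact tendsto_const_nhds.sub (((continuous_apply i).continuousAt.tendsto.comp hconv :))
      have := tendsto_nhds_unique (h1.congr (fun m => (h2 m))) h3
      rw [this]
      simp [eval_prod]
    rw [hqeq]
    have : ∏ i : Fin N, (X - C (ρ i)) = (Multiset.map (fun a => X - C a) ↑(List.ofFn ρ)).prod := by
      rw [Multiset.map_coe, Multiset.prod_coe, List.map_ofFn, List.prod_ofFn]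
      rfl
    rw [this, roots_multiset_prod_X_sub_C]

variable {n : Type*} [Fintype n] [DecidableEq n]

/-- convex combination with the identity -/
noncomputable def cmb (t : ℝ) (A : Matrix n n ℝ) : Matrix n n ℝ :=
  (1 - t) • (1 : Matrix n n ℝ) + t • A

lemma cmb_zero (A : Matrix n n ℝ) : cmb 0 A = 1 := by simp [cmb]

lemma cmb_one (A : Matrix n n ℝ) : cmb 1 A = A := by simp [cmb]

lemma cmb_posDef {A : Matrix n n ℝ} (hA : A.PosDef) {t : ℝ}
    (h0 : 0 ≤ t) (h1 : t ≤ 1) : (cmb t A).PosDef := by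
  refine posDef_iff_dotProduct_mulVec.mpr ⟨?_, ?_⟩
  · show _ = _
    rw [cmb, conjTranspose_add, conjTranspose_smul, conjTranspose_smul, conjTranspose_one,
      hA.1.eq]
    simp
  · intro x hx
    have q0 := (Matrix.PosDef.one (n := n) (R := ℝ)).dotProduct_mulVec_pos hx
    have q1 := hA.dotProduct_mulVec_pos hx
    rw [cmb, add_mulVec, smul_mulVec, smul_mulVec, dotProduct_add, dotProduct_smul,
      dotProduct_smul, smul_eq_mul, smul_eq_mul]
    rcases eq_or_lt_of_le h1 with rfl | h1'
    · simpa using q1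
    · exact add_pos_of_pos_of_nonneg (mul_pos (by linarith) q0) (mul_nonneg h0 q1.le)

lemma cmb_continuous (A : Matrix n n ℝ) : Continuous fun t : ℝ => cmb t A := by
  unfold cmb
  exact ((continuous_const.sub continuous_id).smul continuous_const).add
    (continuous_id.smul continuous_const)

lemma wordEval_cons (c : Bool) (w : List Bool) (A B : Matrix n n ℝ) :
    wordEval (c :: w) A B = (if c then B else A) * wordEval w A B := by
  simp [wordEval]

lemma wordEval_one (w : List Bool) : wordEval w (1 : Matrix n n ℝ) 1 = 1 := by
  induction w with
  | nil => rfl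
  | cons c w ih =>
    rw [wordEval_cons, ih]
    cases c <;> simp

lemma wordEval_det_pos (w : List Bool) {A B : Matrix n n ℝ} (hA : A.PosDef) (hB : B.PosDef) :
    0 < (wordEval w A B).det := by
  induction w with
  | nil => simp [wordEval]
  | cons c w ih =>
    rw [wordEval_cons, Matrix.det_mul]
    refine mul_pos ?_ ih
    cases c
    · simpa using hA.det_pos
    · simpa using hB.det_pos

lemma wordEval_continuous (w : List Bool) {f g : ℝ → Matrix n n ℝ}
    (hf : Continuous f) (hg : Continuous g) :
    Continuous fun t => wordEval w (f t) (g t) := by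
  induction w with
  | nil => simpa [wordEval] using continuous_const
  | cons c w ih =>
    simp only [wordEval_cons]
    exact Continuous.matrix_mul (by cases c <;> simpa) ih

/-- the family of complex matrices -/
noncomputable def fam (w : List Bool) (A B : Matrix n n ℝ) (t : ℝ) : Matrix n n ℂ :=
  (wordEval w (cmb t A) (cmb t B)).map (algebraMap ℝ ℂ)

/-- the family of characteristic polynomials -/
noncomputable def famP (w : List Bool) (A B : Matrix n n ℝ) (t : ℝ) : Polynomial ℂ :=
  (fam w A B t).charpoly

lemma fam_continuous (w : List Bool) (A B : Matrix n n ℝ) : Continuous (fam w A B) := by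
  have h := wordEval_continuous w (cmb_continuous A) (cmb_continuous B)
  unfold fam
  refine continuous_matrix fun i j => ?_
  exact Complex.continuous_ofReal.comp ((continuous_apply j).comp ((continuous_apply i).comp h))

lemma famP_monic (w : List Bool) (A B : Matrix n n ℝ) (t : ℝ) : (famP w A B t).Monic :=
  Matrix.charpoly_monic _

lemma famP_natDegree (w : List Bool) (A B : Matrix n n ℝ) (t : ℝ) :
    (famP w A B t).natDegree = Fintype.card n :=
  Matrix.charpoly_natDegree_eq_dim _

lemma famP_eval (w : List Bool) (A B : Matrix n n ℝ) (t : ℝ) (z : ℂ) :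
    (famP w A B t).eval z = (Matrix.scalar n z - fam w A B t).det := by
  rw [famP, Matrix.charpoly, eval_det, matPolyEquiv_charmatrix]
  simp

lemma famP_eval_continuous (w : List Bool) (A B : Matrix n n ℝ) (z : ℂ) :
    Continuous fun t => (famP w A B t).eval z := by
  simp only [famP_eval]
  exact Continuous.matrix_det (continuous_const.sub (fam_continuous w A B))

lemma fam_det_pos (w : List Bool) {A B : Matrix n n ℝ} (hA : A.PosDef) (hB : B.PosDef)
    {t : ℝ} (h0 : 0 ≤ t) (h1 : t ≤ 1) : (fam w A B t).det ≠ 0 := by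
  rw [fam, ← RingHom.mapMatrix_apply, ← RingHom.map_det]
  have := wordEval_det_pos w (cmb_posDef hA h0 h1) (cmb_posDef hB h0 h1)
  simpa using this.ne'

lemma famP_root_ne_zero (w : List Bool) {A B : Matrix n n ℝ} (hA : A.PosDef) (hB : B.PosDef)
    {t : ℝ} (h0 : 0 ≤ t) (h1 : t ≤ 1) {z : ℂ} (hz : z ∈ (famP w A B t).roots) : z ≠ 0 := by
  rintro rfl
  have h := (mem_roots'.mp hz).2
  rw [IsRoot, famP_eval] at h
  rw [map_zero, zero_sub, Matrix.det_neg] at h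
  have := fam_det_pos w hA hB h0 h1
  simp only [mul_eq_zero] at h
  rcases h with h | h
  · exact pow_ne_zero _ (by norm_num : (-1 : ℂ) ≠ 0) h
  · exact this h

/-- the uniform bound function -/
noncomputable def bnd (w : List Bool) (A B : Matrix n n ℝ) (t : ℝ) : ℝ :=
  ∑ i, ∑ j, ‖fam w A B t i j‖

lemma bnd_continuous (w : List Bool) (A B : Matrix n n ℝ) : Continuous (bnd w A B) := by
  unfold bnd
  refine continuous_finset_sum _ fun i _ => continuous_finset_sum _ fun j _ => ?_
  exact continuous_norm.comp
    (((continuous_apply j).comp ((continuous_apply i).comp (fam_continuous w A B))))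

lemma famP_root_le_bnd [Nonempty n] (w : List Bool) (A B : Matrix n n ℝ) (t : ℝ) {z : ℂ}
    (hz : z ∈ (famP w A B t).roots) : ‖z‖ ≤ bnd w A B t :=
  rootBound _ _ (mem_roots'.mp hz).2

/-- The key sequential-compactness package for the family. -/
lemma seq_setup [Nonempty n] (w : List Bool) (A B : Matrix n n ℝ) {s : ℝ}
    (u : ℕ → ℝ) (hut : Tendsto u atTop (nhds s)) :
    ∃ (φ : ℕ → ℕ) (r : ℕ → Fin (Fintype.card n) → ℂ) (ρ : Fin (Fintype.card n) → ℂ),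
      StrictMono φ ∧
      (∀ m, (famP w A B (u (φ m))).roots = ↑(List.ofFn (r m))) ∧
      (∀ i, Tendsto (fun m => r m i) atTop (nhds (ρ i))) ∧
      (famP w A B s).roots = ↑(List.ofFn ρ) := by
  have hbdd : BddAbove (Set.range fun m => bnd w A B (u m)) :=
    (((bnd_continuous w A B).continuousAt.tendsto).comp hut).bddAbove_range
  obtain ⟨R, hR⟩ := hbdd
  refine roots_tendsto (fun m => famP w A B (u m)) (famP w A B s)
    (fun m => famP_monic w A B _) (fun m => famP_natDegree w A B _) ?_ R ?_
  · intro z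
    exact ((famP_eval_continuous w A B z).continuousAt.tendsto).comp hut
  · intro m z hz
    exact (famP_root_le_bnd w A B _ hz).trans (hR ⟨m, rfl⟩)

end WordPowAux

open WordPowAux Polynomial Filter Topology in
/-- If some positive definite pair gives the word `W` an eigenvalue that is not a
positive real, then for every positive integer `k` there exist positive definite
`A'`, `B'` of the same size giving `W^k` an eigenvalue that is not a positive real. -/
theorem word_pow_nonpositive_eigenvalue {n : Type*} [Fintype n] [DecidableEq n]
    (w : List Bool)
    (h : ∃ A B : Matrix n n ℝ, A.PosDef ∧ B.PosDef ∧
      ∃ μ ∈ spectrum ℂ ((wordEval w A B).map (algebraMap ℝ ℂ)), ¬(μ.im = 0 ∧ 0 < μ.re)) :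
    ∀ k : ℕ, 0 < k →
      ∃ A' B' : Matrix n n ℝ, A'.PosDef ∧ B'.PosDef ∧
        ∃ μ ∈ spectrum ℂ (((wordEval w A' B') ^ k).map (algebraMap ℝ ℂ)),
          ¬(μ.im = 0 ∧ 0 < μ.re) := by
  obtain ⟨A, B, hA, hB, μ, hμspec, hμbad⟩ := h
  intro k hk
  -- the index type is nonempty
  have hne : Nonempty n := by
    by_contra hemp
    rw [not_nonempty_iff] at hemp
    have : IsUnit ((algebraMap ℂ (Matrix n n ℂ)) μ - (wordEval w A B).map (algebraMap ℝ ℂ)) :=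
      isUnit_of_subsingleton _
    exact (spectrum.mem_iff.mp hμspec) this
  have hN : 0 < Fintype.card n := Fintype.card_pos
  -- μ is a root of the characteristic polynomial at time 1
  have hfam1 : fam w A B 1 = (wordEval w A B).map (algebraMap ℝ ℂ) := by
    rw [fam, cmb_one, cmb_one]
  have hμroot : μ ∈ (famP w A B 1).roots := by
    rw [mem_roots']
    refine ⟨(famP_monic w A B 1).ne_zero, ?_⟩
    have hspec1 : μ ∈ spectrum ℂ (fam w A B 1) := by rw [hfam1]; exact hμspec
    have := (bridge _ μ).mp hspec1
    rwa [famP]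
  have hμne : μ ≠ 0 := famP_root_ne_zero w hA hB zero_le_one le_rfl hμroot
  have hμabs : 0 < ‖μ‖ := by
    simpa [norm_pos_iff] using hμne
  -- the argument of μ is nonzero
  have harg : μ.arg ≠ 0 := by
    intro h0
    obtain ⟨hre, him⟩ := Complex.arg_eq_zero_iff.mp h0
    apply hμbad
    refine ⟨him, ?_⟩
    rcases lt_or_eq_of_le hre with h | h
    · exact h
    · exact absurd (by apply Complex.ext <;> simp [← h, him] : μ = 0) hμne
  -- the target angle
  set ε : ℝ := min |μ.arg| (Real.pi / (2 * k)) with hε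
  have hε0 : 0 < ε := by
    refine lt_min (abs_pos.mpr harg) ?_
    positivity
  have hεarg : ε ≤ |μ.arg| := min_le_left _ _
  have hεk : ε ≤ Real.pi / (2 * k) := min_le_right _ _
  have hεπ2 : ε ≤ Real.pi / 2 := by
    refine hεk.trans ?_
    have hk1 : (1 : ℝ) ≤ k := by exact_mod_cast hk
    rw [div_le_div_iff₀ (by positivity) (by norm_num)]
    nlinarith [Real.pi_pos]
  have hεπ : ε ≤ Real.pi := hεπ2.trans (by linarith [Real.pi_pos])
  set c : ℝ := Real.cos ε with hc
  have hc1 : c < 1 := by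
    have := Real.cos_lt_cos_of_nonneg_of_le_pi le_rfl hεπ hε0
    simpa [hc] using this
  -- the bad set
  set S : Set ℝ := {t | t ∈ Set.Icc (0:ℝ) 1 ∧
      ∃ z ∈ (famP w A B t).roots, z.re ≤ c * ‖z‖} with hS
  have h1S : (1:ℝ) ∈ S := by
    refine ⟨⟨zero_le_one, le_rfl⟩, μ, hμroot, ?_⟩
    have hcosarg : Real.cos μ.arg = μ.re / ‖μ‖ := Complex.cos_arg hμne
    have hre : μ.re = Real.cos μ.arg * ‖μ‖ := by
      field_simp at hcosarg
      linarith [hcosarg]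
    have hcosle : Real.cos |μ.arg| ≤ c := by
      refine Real.strictAntiOn_cos.antitoneOn ⟨hε0.le, hεπ⟩
        ⟨abs_nonneg _, Complex.abs_arg_le_pi μ⟩ hεarg
    rw [hre, ← Real.cos_abs]
    exact mul_le_mul_of_nonneg_right hcosle (norm_nonneg μ)
  have hSbdd : BddBelow S := ⟨0, fun t ht => ht.1.1⟩
  have hSne : S.Nonempty := ⟨1, h1S⟩
  set s : ℝ := sInf S with hs
  have hs0 : 0 ≤ s := le_csInf hSne fun t ht => ht.1.1
  have hs1 : s ≤ 1 := csInf_le hSbdd h1S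
  -- Claim 1: some root of famP at s satisfies re ≤ c * abs
  have claim1 : ∃ z ∈ (famP w A B s).roots, z.re ≤ c * ‖z‖ := by
    obtain ⟨u, -, hut, huS⟩ := exists_seq_tendsto_sInf hSne hSbdd
    rw [← hs] at hut
    obtain ⟨φ, r, ρ, hφ, hroots, hconv, hroots'⟩ := seq_setup w A B u hut
    have hex : ∀ m, ∃ i, (r m i).re ≤ c * ‖r m i‖ := by
      intro m
      obtain ⟨-, z, hzmem, hzle⟩ := huS (φ m)
      rw [hroots m] at hzmem
      obtain ⟨i, hi⟩ := List.mem_ofFn.mp hzmem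
      exact ⟨i, by rw [hi]; exact hzle⟩
    have hfreq : ∃ i, ∃ᶠ m in atTop, (r m i).re ≤ c * ‖r m i‖ := by
      by_contra hcon
      push_neg at hcon
      have hev : ∀ᶠ m in atTop, ∀ i, ¬((r m i).re ≤ c * ‖r m i‖) :=
        eventually_all.mpr fun i => ((hcon i).mono fun m hm => not_le.mpr hm)
      obtain ⟨m, hm⟩ := hev.exists
      obtain ⟨i, hi⟩ := hex m
      exact hm i hi
    obtain ⟨i, hfreq⟩ := hfreq
    have hclosed : IsClosed {z : ℂ | z.re ≤ c * ‖z‖} :=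
      isClosed_le Complex.continuous_re (continuous_const.mul continuous_norm)
    have hmem : ρ i ∈ {z : ℂ | z.re ≤ c * ‖z‖} := by
      rw [← hclosed.closure_eq]
      exact mem_closure_of_frequently_of_tendsto hfreq (hconv i)
    refine ⟨ρ i, ?_, hmem⟩
    rw [hroots']
    exact List.mem_ofFn.mpr ⟨i, rfl⟩
  -- Claim 2: every root of famP at s satisfies c * abs ≤ re
  have claim2 : ∀ z ∈ (famP w A B s).roots, c * ‖z‖ ≤ z.re := by
    rcases eq_or_lt_of_le hs0 with hs0' | hs0'
    · -- s = 0 : all roots are 1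
      intro z hz
      have hfam0 : fam w A B 0 = 1 := by
        rw [fam, cmb_zero, cmb_zero, wordEval_one]
        ext i j
        by_cases hij : i = j <;> simp [Matrix.one_apply, hij]
      have hroot := (mem_roots'.mp hz).2
      rw [← hs0'] at hroot
      rw [IsRoot, famP_eval, hfam0] at hroot
      have : Matrix.scalar n z - 1 = Matrix.scalar n (z - 1) := by simp [map_sub]
      rw [this] at hroot
      have hdet : (Matrix.scalar n (z - 1)).det = (z - 1) ^ Fintype.card n := by
        rw [show Matrix.scalar n (z - 1) = (z - 1) • (1 : Matrix n n ℂ) from ?_,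
          Matrix.det_smul]
        · simp
        · simp [Matrix.scalar, Matrix.smul_one_eq_diagonal]
      rw [hdet, pow_eq_zero_iff hN.ne', sub_eq_zero] at hroot
      rw [hroot]
      simpa using hc1.le
    · -- s > 0 : approach from the left
      set u : ℕ → ℝ := fun m => s - s / (m + 1) with hu
      have hut : Tendsto u atTop (nhds s) := by
        have h1 : Tendsto (fun m : ℕ => s / (m + 1)) atTop (nhds 0) := by
          have h2 := (tendsto_const_div_atTop_nhds_zero_nat s).comp
            (tendsto_add_atTop_nat 1)
          exact h2.congr fun m => by push_cast [Function.comp_apply]; ring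
        have := (tendsto_const_nhds (x := s) (f := atTop (α := ℕ))).sub h1
        simpa using this
      have humem : ∀ m, u m ∈ Set.Icc (0:ℝ) 1 ∧ u m < s := by
        intro m
        have hm1 : (1:ℝ) ≤ (m:ℝ) + 1 := by
          have : (0:ℝ) ≤ (m:ℝ) := Nat.cast_nonneg m
          linarith
        have hpos : 0 < s / ((m:ℝ) + 1) := div_pos hs0' (by positivity)
        have hle : s / ((m:ℝ) + 1) ≤ s := div_le_self hs0'.le hm1
        refine ⟨⟨by simp [hu]; linarith, ?_⟩, ?_⟩
        · simp only [hu]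
          linarith
        · simp only [hu]
          linarith
      have hunotS : ∀ m, u m ∉ S := by
        intro m hmem
        exact absurd (csInf_le hSbdd hmem) (not_le.mpr (humem m).2)
      obtain ⟨φ, r, ρ, hφ, hroots, hconv, hroots'⟩ := seq_setup w A B u hut
      have hall : ∀ m i, c * ‖r m i‖ ≤ (r m i).re := by
        intro m i
        have hnot : ¬∃ z ∈ (famP w A B (u (φ m))).roots, z.re ≤ c * ‖z‖ := by
          intro hcon
          exact hunotS (φ m) ⟨(humem (φ m)).1, hcon⟩
        push_neg at hnot
        have hmem : r m i ∈ (famP w A B (u (φ m))).roots := by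
          rw [hroots m]
          exact List.mem_ofFn.mpr ⟨i, rfl⟩
        exact (hnot _ hmem).le
      intro z hz
      rw [hroots'] at hz
      obtain ⟨i, hi⟩ := List.mem_ofFn.mp hz
      have hclosed : IsClosed {z : ℂ | c * ‖z‖ ≤ z.re} :=
        isClosed_le (continuous_const.mul continuous_norm) Complex.continuous_re
      have : ρ i ∈ {z : ℂ | c * ‖z‖ ≤ z.re} :=
        hclosed.mem_of_tendsto (hconv i) (Eventually.of_forall fun m => hall m i)
      rwa [← hi]
  -- combine: there is a root with |arg| = ε exactly
  obtain ⟨z, hzroot, hzle⟩ := claim1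
  have hzge := claim2 z hzroot
  have hzeq : z.re = c * ‖z‖ := le_antisymm hzle hzge
  have hzne : z ≠ 0 := famP_root_ne_zero w hA hB hs0 hs1 hzroot
  have hzabs : 0 < ‖z‖ := by simpa [norm_pos_iff] using hzne
  have hcosz : Real.cos z.arg = c := by
    rw [Complex.cos_arg hzne, hzeq]
    field_simp
  have hargz : |z.arg| = ε := by
    refine Real.injOn_cos ⟨abs_nonneg _, Complex.abs_arg_le_pi z⟩ ⟨hε0.le, hεπ⟩ ?_
    rw [Real.cos_abs, hcosz]
  -- conclusion
  refine ⟨cmb s A, cmb s B, cmb_posDef hA hs0 hs1, cmb_posDef hB hs0 hs1, z ^ k, ?_, ?_⟩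
  · -- spectrum membership
    have hzspec : z ∈ spectrum ℂ (fam w A B s) := by
      refine (bridge _ z).mpr ?_
      have := (mem_roots'.mp hzroot).2
      rwa [famP] at this
    have hsub := spectrum.subset_polynomial_aeval (fam w A B s) (X ^ k : Polynomial ℂ)
    have hmem : z ^ k ∈ spectrum ℂ (aeval (fam w A B s) (X ^ k : Polynomial ℂ)) := by
      refine hsub ⟨z, hzspec, ?_⟩
      simp
    rw [map_pow, aeval_X] at hmem
    have hmapk : ((wordEval w (cmb s A) (cmb s B)) ^ k).map (algebraMap ℝ ℂ)
        = (fam w A B s) ^ k := by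
      rw [fam, ← RingHom.mapMatrix_apply, ← RingHom.mapMatrix_apply, map_pow]
    rwa [hmapk]
  · -- the eigenvalue is not a positive real
    rintro ⟨him, -⟩
    have hzpow : z ^ k = ((‖z‖ ^ k : ℝ) : ℂ)
        * Complex.exp (((k * z.arg : ℝ) : ℂ) * Complex.I) := by
      conv_lhs => rw [← Complex.norm_mul_exp_arg_mul_I z]
      rw [mul_pow, ← Complex.exp_nat_mul]
      push_cast
      ring_nf
    have him' : (z ^ k).im = ‖z‖ ^ k * Real.sin ((k : ℝ) * z.arg) := by
      rw [hzpow, Complex.mul_im, Complex.ofReal_re, Complex.ofReal_im,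
        Complex.exp_ofReal_mul_I_im]
      ring
    have hsinpos : 0 < Real.sin (k * ε) := by
      refine Real.sin_pos_of_pos_of_lt_pi (by positivity) ?_
      have hk0 : (0:ℝ) < k := by exact_mod_cast hk
      have : (k : ℝ) * ε ≤ (k : ℝ) * (Real.pi / (2 * k)) :=
        mul_le_mul_of_nonneg_left hεk hk0.le
      have heq : (k : ℝ) * (Real.pi / (2 * k)) = Real.pi / 2 := by
        field_simp
      rw [heq] at this
      linarith [Real.pi_pos]
    have hargcases : z.arg = ε ∨ z.arg = -ε := (abs_eq hε0.le).mp hargz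
    have hsin : Real.sin ((k : ℝ) * z.arg) ≠ 0 := by
      rcases hargcases with h | h
      · rw [h]; exact hsinpos.ne'
      · rw [h, mul_neg, Real.sin_neg]
        exact neg_ne_zero.mpr hsinpos.ne'
    rw [him'] at him
    rcases mul_eq_zero.mp him with h | h
    · exact (pow_ne_zero _ hzabs.ne') h
    · exact hsin h
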